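/- Let L = L₀ ⊕ L₁ be a finite-dimensional nilpotent complex Leibniz superalgebra with dim L₁ = m ≥ 1 which is generated by two elements. Suppose there exists x ∈ L₀ \ L₀² such that (R_x|_{L₁})^{m−1} ≠ 0 and (R_x|_{L₁})^{m} = 0 (i.e. R_x acts on L₁ by a single Jordan block of size m). Then there exist elements x₁ ∈ L₀ and y₁ ∈ L₁ which together generate L, and a basis y₁, y₂, …, y_m of L₁ satisfying [y_j, x₁] = y_{j+1} for 1 ≤ j ≤ m−1 and [y_m, x₁] = 0. -/

import Mathlib

/-- A complex Leibniz superalgebra structure on a vector space `V`: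
a bilinear bracket together with an internal ℤ₂-grading `V = L0 ⊕ L1`
such that the bracket respects the grading and the Leibniz superidentity
`[x,[y,z]] = [[x,y],z] − (−1)^{αβ}[[x,z],y]` holds for homogeneous `y, z`. -/
structure LeibnizSuperAlg (V : Type*) [AddCommGroup V] [Module ℂ V] where
  br : V →ₗ[ℂ] V →ₗ[ℂ] V
  L0 : Submodule ℂ V
  L1 : Submodule ℂ V
  compl : IsCompl L0 L1
  grade00 : ∀ x ∈ L0, ∀ y ∈ L0, br x y ∈ L0
  grade01 : ∀ x ∈ L0, ∀ y ∈ L1, br x y ∈ L1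
  grade10 : ∀ x ∈ L1, ∀ y ∈ L0, br x y ∈ L1
  grade11 : ∀ x ∈ L1, ∀ y ∈ L1, br x y ∈ L0
  super_ee : ∀ (x : V), ∀ y ∈ L0, ∀ z ∈ L0,
    br x (br y z) = br (br x y) z - br (br x z) y
  super_eo : ∀ (x : V), ∀ y ∈ L0, ∀ z ∈ L1,
    br x (br y z) = br (br x y) z - br (br x z) y
  super_oe : ∀ (x : V), ∀ y ∈ L1, ∀ z ∈ L0,
    br x (br y z) = br (br x y) z - br (br x z) y
  super_oo : ∀ (x : V), ∀ y ∈ L1, ∀ z ∈ L1,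
    br x (br y z) = br (br x y) z + br (br x z) y

namespace LeibnizSuperAlg

variable {V : Type*} [AddCommGroup V] [Module ℂ V]

/-- The span of all products `[u,v]` with `u ∈ S`, `v ∈ T`. -/
def prodSpan (A : LeibnizSuperAlg V) (S T : Submodule ℂ V) : Submodule ℂ V :=
  Submodule.span ℂ {z : V | ∃ u ∈ S, ∃ v ∈ T, z = A.br u v}

/-- `A.lcs k` is the `(k+1)`-st term `L^{k+1}` of the descending central series:
`L¹ = L`, `L^{k+1} = [L^k, L]`. -/
def lcs (A : LeibnizSuperAlg V) : ℕ → Submodule ℂ V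
  | 0 => ⊤
  | k + 1 => A.prodSpan (lcs A k) ⊤

/-- `A.lcs0 k` is the `(k+1)`-st term `L₀^{k+1}` of the descending central series
of the even part: `L₀¹ = L₀`, `L₀^{k+1} = [L₀^k, L₀]`. -/
def lcs0 (A : LeibnizSuperAlg V) : ℕ → Submodule ℂ V
  | 0 => A.L0
  | k + 1 => A.prodSpan (lcs0 A k) A.L0

/-- Nilpotency: some term of the descending central series vanishes. -/
def IsNilpotent (A : LeibnizSuperAlg V) : Prop := ∃ s, A.lcs s = ⊥

/-- `S` generates `L`: the smallest subspace containing `S` and closed under the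
product is `L` itself. -/
def Generates (A : LeibnizSuperAlg V) (S : Set V) : Prop :=
  ∀ W : Submodule ℂ V, S ⊆ W → (∀ u ∈ W, ∀ v ∈ W, A.br u v ∈ W) → W = ⊤

/-- The operator of right multiplication `R_x : z ↦ [z, x]`. -/
def R (A : LeibnizSuperAlg V) (x : V) : V →ₗ[ℂ] V := A.br.flip x

variable (A : LeibnizSuperAlg V)

lemma mem_prodSpan {S T : Submodule ℂ V} {u v : V} (hu : u ∈ S) (hv : v ∈ T) :
    A.br u v ∈ A.prodSpan S T :=
  Submodule.subset_span ⟨u, hu, v, hv, rfl⟩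

lemma prodSpan_le {S T : Submodule ℂ V} {U : Submodule ℂ V}
    (h : ∀ u ∈ S, ∀ v ∈ T, A.br u v ∈ U) : A.prodSpan S T ≤ U := by
  rw [prodSpan, Submodule.span_le]
  rintro w ⟨u, hu, v, hv, rfl⟩
  exact h u hu v hv

lemma prodSpan_mono {S S' T T' : Submodule ℂ V} (hS : S ≤ S') (hT : T ≤ T') :
    A.prodSpan S T ≤ A.prodSpan S' T' :=
  A.prodSpan_le fun u hu v hv => A.mem_prodSpan (hS hu) (hT hv)

@[simp] lemma lcs_zero : A.lcs 0 = ⊤ := rfl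

lemma lcs_succ (k : ℕ) : A.lcs (k + 1) = A.prodSpan (A.lcs k) ⊤ := rfl

lemma br_mem_lcs_one (u v : V) : A.br u v ∈ A.lcs 1 :=
  A.mem_prodSpan trivial trivial

lemma exists_decomp (v : V) : ∃ a ∈ A.L0, ∃ b ∈ A.L1, a + b = v := by
  have : v ∈ A.L0 ⊔ A.L1 := by rw [A.compl.codisjoint.eq_top]; trivial
  exact Submodule.mem_sup.mp this

lemma L0_inf_L1 : A.L0 ⊓ A.L1 = ⊥ := A.compl.disjoint.eq_bot

lemma lcs_graded (k : ℕ) : A.lcs k ≤ (A.lcs k ⊓ A.L0) ⊔ (A.lcs k ⊓ A.L1) := by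
  induction k with
  | zero =>
    intro v _
    obtain ⟨a, ha, b, hb, hab⟩ := A.exists_decomp v
    exact hab ▸ Submodule.add_mem_sup (by simp [ha]) (by simp [hb])
  | succ k ih =>
    rw [lcs_succ, prodSpan, Submodule.span_le]
    rintro w ⟨u, hu, v, _, rfl⟩
    obtain ⟨u0, hu0, u1, hu1, huu⟩ := Submodule.mem_sup.mp (ih hu)
    obtain ⟨v0, hv0, v1, hv1, hvv⟩ := A.exists_decomp v
    have hexp : A.br u v = (A.br u0 v0 + A.br u1 v1) + (A.br u0 v1 + A.br u1 v0) := by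
      rw [← huu, ← hvv]; simp only [map_add, LinearMap.add_apply]; abel
    rw [hexp]
    refine Submodule.add_mem_sup (Submodule.add_mem _ ?_ ?_) (Submodule.add_mem _ ?_ ?_)
    · exact ⟨A.mem_prodSpan (Submodule.mem_inf.mp hu0).1 trivial,
        A.grade00 _ (Submodule.mem_inf.mp hu0).2 _ hv0⟩
    · exact ⟨A.mem_prodSpan (Submodule.mem_inf.mp hu1).1 trivial,
        A.grade11 _ (Submodule.mem_inf.mp hu1).2 _ hv1⟩
    · exact ⟨A.mem_prodSpan (Submodule.mem_inf.mp hu0).1 trivial,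
        A.grade01 _ (Submodule.mem_inf.mp hu0).2 _ hv1⟩
    · exact ⟨A.mem_prodSpan (Submodule.mem_inf.mp hu1).1 trivial,
        A.grade10 _ (Submodule.mem_inf.mp hu1).2 _ hv0⟩

/-- `[Lⁱ⁺¹, Lʲ⁺¹] ⊆ L^{i+j+2}` in `lcs` indexing. -/
lemma prodSpan_lcs_lcs (j : ℕ) : ∀ i : ℕ, A.prodSpan (A.lcs i) (A.lcs j) ≤ A.lcs (i + j + 1) := by
  induction j with
  | zero => intro i; rw [lcs_zero]; exact le_of_eq (A.lcs_succ i).symm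
  | succ j ih =>
    intro i
    refine A.prodSpan_le fun u hu t ht => ?_
    have key : A.lcs (j + 1) ≤ Submodule.comap (A.br u) (A.lcs (i + (j + 1) + 1)) := by
      rw [lcs_succ, prodSpan, Submodule.span_le]
      rintro w ⟨v, hv, q, _, rfl⟩
      obtain ⟨v0, hv0, v1, hv1, hvv⟩ := Submodule.mem_sup.mp (A.lcs_graded j hv)
      obtain ⟨q0, hq0, q1, hq1, hqq⟩ := A.exists_decomp q
      simp only [SetLike.mem_coe, Submodule.mem_comap]
      have hexp : A.br u (A.br v q) =
          A.br u (A.br v0 q0) + A.br u (A.br v0 q1)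
          + A.br u (A.br v1 q0) + A.br u (A.br v1 q1) := by
        rw [← hvv, ← hqq]; simp only [map_add, LinearMap.add_apply]; abel
      have e1 : i + (j + 1) + 1 = (i + j + 1) + 1 := by omega
      have e2 : i + (j + 1) + 1 = (i + 1) + j + 1 := by omega
      have mem1 : ∀ a ∈ A.lcs j, ∀ b : V, A.br (A.br u a) b ∈ A.lcs (i + (j + 1) + 1) := by
        intro a ha b
        rw [e1]
        exact A.mem_prodSpan (ih i (A.mem_prodSpan hu ha)) trivial
      have mem2 : ∀ a ∈ A.lcs j, ∀ b : V, A.br (A.br u b) a ∈ A.lcs (i + (j + 1) + 1) := by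
        intro a ha b
        rw [e2]
        exact ih (i + 1) (A.mem_prodSpan (A.mem_prodSpan hu (Submodule.mem_top)) ha)
      rw [hexp, A.super_ee u v0 hv0.2 q0 hq0, A.super_eo u v0 hv0.2 q1 hq1,
        A.super_oe u v1 hv1.2 q0 hq0, A.super_oo u v1 hv1.2 q1 hq1]
      have h00 := Submodule.sub_mem _ (mem1 v0 hv0.1 q0) (mem2 v0 hv0.1 q0)
      have h01 := Submodule.sub_mem _ (mem1 v0 hv0.1 q1) (mem2 v0 hv0.1 q1)
      have h10 := Submodule.sub_mem _ (mem1 v1 hv1.1 q0) (mem2 v1 hv1.1 q0)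
      have h11 := Submodule.add_mem _ (mem1 v1 hv1.1 q1) (mem2 v1 hv1.1 q1)
      exact Submodule.add_mem _ (Submodule.add_mem _ (Submodule.add_mem _ h00 h01) h10) h11
    exact key ht

lemma R_apply (x w : V) : A.R x w = A.br w x := rfl

lemma R_pow_mem (v : V) (k : ℕ) (w : V) : ((A.R v) ^ k) w ∈ A.lcs k := by
  induction k with
  | zero => trivial
  | succ k ih =>
    rw [pow_succ', Module.End.mul_apply]
    exact A.mem_prodSpan ih trivial

/-- A subalgebra which is everything modulo `L²` is everything. -/
lemma subalg_top (hnil : A.IsNilpotent) (W : Submodule ℂ V)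
    (hW : ∀ u ∈ W, ∀ v ∈ W, A.br u v ∈ W) (h1 : W ⊔ A.lcs 1 = ⊤) : W = ⊤ := by
  have key : ∀ k, W ⊔ A.lcs k = ⊤ := by
    intro k
    induction k with
    | zero => simp [lcs_zero]
    | succ k ih =>
      have hstep : A.lcs k ≤ W ⊔ A.lcs (k + 1) := by
        cases k with
        | zero => rw [lcs_zero, ← h1]
        | succ k' =>
          rw [lcs_succ, prodSpan, Submodule.span_le]
          rintro w ⟨u, hu, v, _, rfl⟩
          have hu' : u ∈ W ⊔ A.lcs (k' + 1) := by rw [ih]; trivial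
          have hv' : v ∈ W ⊔ A.lcs (k' + 1) := by rw [ih]; trivial
          obtain ⟨wu, hwu, au, hau, huu⟩ := Submodule.mem_sup.mp hu'
          obtain ⟨wv, hwv, av, hav, hvv⟩ := Submodule.mem_sup.mp hv'
          have hexp : A.br u v = A.br wu wv + A.br wu av + (A.br au wv + A.br au av) := by
            rw [← huu, ← hvv]; simp only [map_add, LinearMap.add_apply]; abel
          rw [SetLike.mem_coe, hexp]
          refine Submodule.add_mem _ (Submodule.add_mem _ ?_ ?_) (Submodule.add_mem _ ?_ ?_)
          · exact Submodule.mem_sup_left (hW _ hwu _ hwv)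
          · refine Submodule.mem_sup_right ?_
            have := A.prodSpan_lcs_lcs (k' + 1) 0 (A.mem_prodSpan (show wu ∈ A.lcs 0 from trivial) hav)
            simpa using this
          · exact Submodule.mem_sup_right (A.mem_prodSpan hau trivial)
          · exact Submodule.mem_sup_right (A.mem_prodSpan hau trivial)
      rw [eq_top_iff]
      calc ⊤ = W ⊔ A.lcs k := ih.symm
        _ ≤ W ⊔ (W ⊔ A.lcs (k + 1)) := sup_le_sup_left hstep W
        _ = W ⊔ A.lcs (k + 1) := by rw [← sup_assoc, sup_idem]
  obtain ⟨s, hs⟩ := hnil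
  have := key s
  rwa [hs, sup_bot_eq] at this

lemma evenPart_le_L0 : A.prodSpan A.L0 A.L0 ⊔ A.prodSpan A.L1 A.L1 ≤ A.L0 :=
  sup_le (A.prodSpan_le fun u hu v hv => A.grade00 u hu v hv)
    (A.prodSpan_le fun u hu v hv => A.grade11 u hu v hv)

lemma oddPart_le_L1 : A.prodSpan A.L0 A.L1 ⊔ A.prodSpan A.L1 A.L0 ≤ A.L1 :=
  sup_le (A.prodSpan_le fun u hu v hv => A.grade01 u hu v hv)
    (A.prodSpan_le fun u hu v hv => A.grade10 u hu v hv)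

lemma lcs_one_le_parity :
    A.lcs 1 ≤ (A.prodSpan A.L0 A.L0 ⊔ A.prodSpan A.L1 A.L1)
      ⊔ (A.prodSpan A.L0 A.L1 ⊔ A.prodSpan A.L1 A.L0) := by
  rw [lcs_succ, prodSpan, Submodule.span_le]
  rintro w ⟨u, _, v, _, rfl⟩
  obtain ⟨u0, hu0, u1, hu1, huu⟩ := A.exists_decomp u
  obtain ⟨v0, hv0, v1, hv1, hvv⟩ := A.exists_decomp v
  have hexp : A.br u v = (A.br u0 v0 + A.br u1 v1) + (A.br u0 v1 + A.br u1 v0) := by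
    rw [← huu, ← hvv]; simp only [map_add, LinearMap.add_apply]; abel
  rw [SetLike.mem_coe, hexp]
  exact Submodule.add_mem_sup
    (Submodule.add_mem _ (Submodule.mem_sup_left (A.mem_prodSpan hu0 hv0))
      (Submodule.mem_sup_right (A.mem_prodSpan hu1 hv1)))
    (Submodule.add_mem _ (Submodule.mem_sup_left (A.mem_prodSpan hu0 hv1))
      (Submodule.mem_sup_right (A.mem_prodSpan hu1 hv0)))

/-- If the odd part were contained in `L²`, it would be contained in every term of the
descending central series. -/
lemma L1_le_bot_of_le_lcs_one (hnil : A.IsNilpotent) (h : A.L1 ≤ A.lcs 1) : A.L1 = ⊥ := by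
  have key : ∀ k, A.L1 ≤ A.lcs k := by
    intro k
    induction k with
    | zero => simp [lcs_zero]
    | succ k ih =>
      intro v hv
      obtain ⟨e, he, o, ho, heo⟩ := Submodule.mem_sup.mp (A.lcs_one_le_parity (h hv))
      have hoL1 : o ∈ A.L1 := A.oddPart_le_L1 ho
      have heL0 : e ∈ A.L0 := A.evenPart_le_L0 he
      have hveq : v = o := by
        have hmem : v - o ∈ A.L0 ⊓ A.L1 :=
          ⟨by rw [← heo]; simpa using heL0, Submodule.sub_mem _ hv hoL1⟩
        rw [A.L0_inf_L1, Submodule.mem_bot] at hmem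
        have := sub_eq_zero.mp hmem
        exact this
      rw [hveq]
      have hOdd : A.prodSpan A.L0 A.L1 ⊔ A.prodSpan A.L1 A.L0 ≤ A.lcs (k + 1) := by
        refine sup_le ?_ ?_
        · refine le_trans (A.prodSpan_mono le_top ih) ?_
          have := A.prodSpan_lcs_lcs k 0
          simpa using this
        · exact le_trans (A.prodSpan_mono ih le_top) (le_of_eq (A.lcs_succ k).symm)
      exact hOdd ho
  obtain ⟨s, hs⟩ := hnil
  exact le_bot_iff.mp (hs ▸ key s)

end LeibnizSuperAlg

section Krylov

variable {W : Type*} [AddCommGroup W] [Module ℂ W]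

lemma pow_zeta_eq_zero_of_le {r : W →ₗ[ℂ] W} {ζ : W} {N : ℕ} (hN : (r ^ N) ζ = 0)
    {j : ℕ} (hj : N ≤ j) : (r ^ j) ζ = 0 := by
  rw [← Nat.sub_add_cancel hj, pow_add, Module.End.mul_apply, hN, map_zero]

lemma krylov_li (r : W →ₗ[ℂ] W) (ζ : W) (k : ℕ)
    (h0 : (r ^ k) ζ ≠ 0) (h1 : ∀ j, k < j → (r ^ j) ζ = 0) :
    LinearIndependent ℂ (fun i : Fin (k + 1) => (r ^ (i : ℕ)) ζ) := by
  rw [Fintype.linearIndependent_iff]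
  intro g hg
  suffices H : ∀ n : ℕ, ∀ i : Fin (k + 1), (i : ℕ) < n → g i = 0 by
    exact fun i => H (k + 1) i i.isLt
  intro n
  induction n with
  | zero => exact fun i hi => absurd hi (Nat.not_lt_zero _)
  | succ n ih =>
    intro i hi
    rcases Nat.lt_or_ge (i : ℕ) n with h | h
    · exact ih i h
    have hin : (i : ℕ) = n := by omega
    have hik : (i : ℕ) ≤ k := Nat.lt_succ_iff.mp i.isLt
    have happ := congrArg (fun w => (r ^ (k - n)) w) hg
    simp only [map_sum, map_zero] at happ
    have hterm : ∀ jj : Fin (k + 1),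
        (r ^ (k - n)) (g jj • (r ^ (jj : ℕ)) ζ) = g jj • (r ^ (k - n + (jj : ℕ))) ζ := by
      intro jj; rw [map_smul, ← Module.End.mul_apply, ← pow_add]
    rw [Finset.sum_congr rfl fun jj _ => hterm jj] at happ
    have hsingle : ∀ jj : Fin (k + 1), jj ∈ Finset.univ → jj ≠ i →
        g jj • (r ^ (k - n + (jj : ℕ))) ζ = 0 := by
      intro jj _ hne
      rcases Nat.lt_or_ge (jj : ℕ) n with hj | hj
      · rw [ih jj hj, zero_smul]
      · have hjn : (jj : ℕ) ≠ n := fun hh => hne (Fin.ext (by omega))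
        have hjk : (jj : ℕ) ≤ k := Nat.lt_succ_iff.mp jj.isLt
        have hlt : k < k - n + (jj : ℕ) := by omega
        rw [h1 _ hlt, smul_zero]
    rw [Finset.sum_eq_single_of_mem i (Finset.mem_univ i) hsingle] at happ
    have hkn : k - n + (i : ℕ) = k := by omega
    rw [hkn] at happ
    exact (smul_eq_zero.mp happ).resolve_right h0

lemma krylov_chain [FiniteDimensional ℂ W] {m : ℕ} (hm : Module.finrank ℂ W = m)
    (hm1 : 1 ≤ m) (r : W →ₗ[ℂ] W) (hr : ∃ N, r ^ N = 0)
    (ζ : W) (hζ : (r ^ (m - 1)) ζ ≠ 0) :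
    (r ^ m) ζ = 0 ∧ LinearIndependent ℂ (fun i : Fin m => (r ^ (i : ℕ)) ζ) ∧
      Submodule.span ℂ (Set.range fun i : Fin m => (r ^ (i : ℕ)) ζ) = ⊤ := by
  classical
  obtain ⟨N, hN⟩ := hr
  have hNζ : (r ^ N) ζ = 0 := by rw [hN]; rfl
  have hbig : ∀ j, N ≤ j → (r ^ j) ζ = 0 := fun j hj => pow_zeta_eq_zero_of_le hNζ hj
  have hmN : m - 1 < N := by
    by_contra hc
    exact hζ (hbig _ (by omega))
  set P : ℕ → Prop := fun k => (r ^ k) ζ ≠ 0 with hP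
  set k := Nat.findGreatest P N with hkdef
  have hPk : P k := Nat.findGreatest_spec (le_of_lt hmN) hζ
  have hgt : ∀ j, k < j → (r ^ j) ζ = 0 := by
    intro j hj
    rcases le_or_gt j N with hjN | hjN
    · exact not_not.mp (Nat.findGreatest_is_greatest hj hjN)
    · exact hbig j (le_of_lt hjN)
  have hli := krylov_li r ζ k hPk hgt
  have hcard : k + 1 ≤ m := by
    have := hli.fintype_card_le_finrank
    simpa [hm] using this
  have hge : m - 1 ≤ k := Nat.le_findGreatest (le_of_lt hmN) hζ
  have hmk : m = k + 1 := by omega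
  subst hmk
  refine ⟨hgt _ (Nat.lt_succ_self k), hli, ?_⟩
  apply hli.span_eq_top_of_card_eq_finrank
  simpa using hm.symm

variable (f0 f1 : W →ₗ[ℂ] W) (z : W)

def polyCoeff : ℕ → ℕ → W
  | 0, j => if j = 0 then z else 0
  | k + 1, j =>
    f0 (polyCoeff k j) + if j = 0 then 0 else f1 (polyCoeff k (j - 1))

lemma polyCoeff_zero_col (k : ℕ) : polyCoeff f0 f1 z k 0 = (f0 ^ k) z := by
  induction k with
  | zero => simp [polyCoeff]
  | succ k ih => rw [polyCoeff, ih, if_pos rfl, add_zero, ← Module.End.mul_apply, ← pow_succ']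

lemma polyCoeff_high : ∀ k j : ℕ, k < j → polyCoeff f0 f1 z k j = 0 := by
  intro k
  induction k with
  | zero => intro j hj; rw [polyCoeff, if_neg (by omega)]
  | succ k ih =>
    intro j hj
    rw [polyCoeff, if_neg (by omega), ih j (by omega), ih (j - 1) (by omega), map_zero, map_zero,
      add_zero]

lemma polyCoeff_expand (t : ℂ) (k : ℕ) :
    ((f0 + t • f1) ^ k) z = ∑ j ∈ Finset.range (k + 1), t ^ j • polyCoeff f0 f1 z k j := by
  induction k with
  | zero => simp [polyCoeff]
  | succ k ih =>
    rw [pow_succ', Module.End.mul_apply, ih, map_sum]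
    have hterm : ∀ j, (f0 + t • f1) (t ^ j • polyCoeff f0 f1 z k j)
        = t ^ j • f0 (polyCoeff f0 f1 z k j) + t ^ (j + 1) • f1 (polyCoeff f0 f1 z k j) := by
      intro j
      simp only [LinearMap.add_apply, LinearMap.smul_apply, map_smul, smul_add]
      rw [smul_smul, ← pow_succ]
    rw [Finset.sum_congr rfl fun j _ => hterm j, Finset.sum_add_distrib]
    have hrhs : ∀ j, t ^ j • polyCoeff f0 f1 z (k + 1) j
        = t ^ j • f0 (polyCoeff f0 f1 z k j)
          + t ^ j • (if j = 0 then (0 : W) else f1 (polyCoeff f0 f1 z k (j - 1))) := by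
      intro j; rw [polyCoeff, smul_add]
    rw [Finset.sum_congr rfl fun j _ => hrhs j, Finset.sum_add_distrib]
    congr 1
    · rw [Finset.sum_range_succ _ (k + 1), polyCoeff_high f0 f1 z k (k + 1) (Nat.lt_succ_self k),
        map_zero, smul_zero, add_zero]
    · rw [Finset.sum_range_succ' _ (k + 1)]
      have hif : ∀ j : ℕ, (t ^ (j + 1) • if j + 1 = 0 then (0 : W)
          else f1 (polyCoeff f0 f1 z k (j + 1 - 1)))
          = t ^ (j + 1) • f1 (polyCoeff f0 f1 z k j) := by
        intro j; rw [if_neg (Nat.succ_ne_zero j), Nat.add_sub_cancel]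
      rw [Finset.sum_congr rfl fun j _ => hif j, if_pos rfl, smul_zero, add_zero]

lemma exists_good_t [FiniteDimensional ℂ W] {m : ℕ} (hm1 : 1 ≤ m)
    (hz : (f0 ^ (m - 1)) z ≠ 0) (B : Set ℂ) (hB : B.Finite) :
    ∃ t : ℂ, t ∉ B ∧ ((f0 + t • f1) ^ (m - 1)) z ≠ 0 := by
  obtain ⟨φ, hφ⟩ : ∃ φ : Module.Dual ℂ W, φ ((f0 ^ (m - 1)) z) ≠ 0 := by
    by_contra hc
    push_neg at hc
    exact hz ((Module.forall_dual_apply_eq_zero_iff ℂ _).mp hc)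
  set p : Polynomial ℂ :=
    ∑ j ∈ Finset.range m, Polynomial.C (φ (polyCoeff f0 f1 z (m - 1) j)) * Polynomial.X ^ j
    with hp
  have heval : ∀ t, p.eval t = φ (((f0 + t • f1) ^ (m - 1)) z) := by
    intro t
    rw [polyCoeff_expand, map_sum, hp]
    rw [Polynomial.eval_finset_sum]
    have hm' : m - 1 + 1 = m := by omega
    rw [hm']
    refine Finset.sum_congr rfl fun j _ => ?_
    rw [Polynomial.eval_mul, Polynomial.eval_C, Polynomial.eval_pow, Polynomial.eval_X,
      map_smul, smul_eq_mul, mul_comm]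
  have hp0 : p.eval 0 = φ ((f0 ^ (m - 1)) z) := by
    rw [heval 0]
    simp
  have hpne : p ≠ 0 := fun h => hφ (by rw [← hp0, h, Polynomial.eval_zero])
  have hfin : (B ∪ {x | p.IsRoot x}).Finite := hB.union (Polynomial.finite_setOf_isRoot hpne)
  obtain ⟨t, ht⟩ := hfin.infinite_compl.nonempty
  rw [Set.mem_compl_iff, Set.mem_union, not_or] at ht
  refine ⟨t, ht.1, fun h => ht.2 ?_⟩
  show p.IsRoot t
  rw [Polynomial.IsRoot, heval t, h, map_zero]

end Krylov

namespace LeibnizSuperAlg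

variable {V : Type*} [AddCommGroup V] [Module ℂ V]

lemma chain_package [FiniteDimensional ℂ V] (A : LeibnizSuperAlg V) {m : ℕ}
    (hm : Module.finrank ℂ A.L1 = m) (hm1 : 1 ≤ m) (hnil : A.IsNilpotent)
    {v : V} (hv : v ∈ A.L0) {z : V} (hz : z ∈ A.L1)
    (hchain : ((A.R v) ^ (m - 1)) z ≠ 0) :
    ∃ y : Fin m → V, (∀ i, y i ∈ A.L1) ∧ LinearIndependent ℂ y ∧
      Submodule.span ℂ (Set.range y) = A.L1 ∧
      y ⟨0, hm1⟩ = z ∧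
      (∀ i : ℕ, ∀ h : i + 1 < m, A.br (y ⟨i, Nat.lt_of_succ_lt h⟩) v = y ⟨i + 1, h⟩) ∧
      A.br (y ⟨m - 1, Nat.sub_lt hm1 Nat.one_pos⟩) v = 0 := by
  obtain ⟨s, hs⟩ := hnil
  have hpres : ∀ w ∈ A.L1, A.R v w ∈ A.L1 := fun w hw => A.grade10 w hw v hv
  set r : A.L1 →ₗ[ℂ] A.L1 := (A.R v).restrict hpres with hrdef
  have hrpow : ∀ (k : ℕ) (w : A.L1), ((r ^ k) w : V) = ((A.R v) ^ k) (w : V) := by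
    intro k w
    rw [hrdef, Module.End.pow_restrict, LinearMap.restrict_coe_apply]
  have hrN : r ^ s = 0 := by
    ext w
    have h2 : ((A.R v) ^ s) (w : V) ∈ A.lcs s := A.R_pow_mem v s (w : V)
    rw [hs, Submodule.mem_bot] at h2
    simp only [LinearMap.zero_apply, ZeroMemClass.coe_zero]
    rw [hrpow s w, h2]
  set ζ : A.L1 := ⟨z, hz⟩ with hζdef
  have hζ : (r ^ (m - 1)) ζ ≠ 0 := by
    intro h
    apply hchain
    have h3 := hrpow (m - 1) ζ
    rw [h] at h3
    simpa using h3.symm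
  obtain ⟨hm0, hli, hspan⟩ := krylov_chain hm hm1 r ⟨s, hrN⟩ ζ hζ
  have hcoe : ∀ w : A.L1, (A.L1.subtype ∘ fun i : Fin m => (r ^ (i : ℕ)) ζ)
      = fun i : Fin m => (((r ^ (i : ℕ)) ζ : V)) := fun _ => rfl
  refine ⟨fun i => ((r ^ (i : ℕ)) ζ : V), fun i => ((r ^ (i : ℕ)) ζ).2, ?_, ?_, ?_, ?_, ?_⟩
  · exact hli.map' A.L1.subtype (Submodule.ker_subtype A.L1)
  · have h4 := congrArg (Submodule.map A.L1.subtype) hspan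
    rw [Submodule.map_span, ← Set.range_comp, Submodule.map_top, Submodule.range_subtype] at h4
    exact h4
  · show ((r ^ (0 : ℕ)) ζ : V) = z
    rw [pow_zero]
    rfl
  · intro i h
    show A.br (((r ^ i) ζ : V)) v = ((r ^ (i + 1)) ζ : V)
    rw [pow_succ', Module.End.mul_apply]
    have h5 : (r ((r ^ i) ζ) : V) = A.R v (((r ^ i) ζ : V)) :=
      LinearMap.restrict_coe_apply _ _ _
    rw [h5, R_apply]
  · show A.br (((r ^ (m - 1)) ζ : V)) v = 0
    have h6 : r ((r ^ (m - 1)) ζ) = 0 := by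
      have h7 : (r ^ m) ζ = 0 := hm0
      have h8 : m = (m - 1) + 1 := by omega
      rw [h8, pow_succ', Module.End.mul_apply] at h7
      exact h7
    have h5 : (r ((r ^ (m - 1)) ζ) : V) = A.R v (((r ^ (m - 1)) ζ : V)) :=
      LinearMap.restrict_coe_apply _ _ _
    rw [← R_apply, ← h5, h6]
    rfl

end LeibnizSuperAlg



/-- In a finite-dimensional nilpotent complex Leibniz superalgebra with
`dim L₁ = m ≥ 1` which is two-generated and admits `x ∈ L₀ \ L₀²` acting on `L₁` by a
single Jordan block of size `m`, one can choose generators `x₁ ∈ L₀`, `y₁ ∈ L₁` and a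
basis `y₁,…,y_m` of `L₁` with `[y_j,x₁] = y_{j+1}` (`1 ≤ j ≤ m−1`) and `[y_m,x₁] = 0`. -/
theorem statement4 {V : Type*} [AddCommGroup V] [Module ℂ V] [FiniteDimensional ℂ V]
    (A : LeibnizSuperAlg V) (m : ℕ)
    (hm : Module.finrank ℂ A.L1 = m) (hm1 : 1 ≤ m)
    (hnil : A.IsNilpotent)
    (h2gen : ∃ a b : V, a ≠ b ∧ A.Generates {a, b})
    (hnot1gen : ∀ g : V, ¬ A.Generates {g})
    (hjordan : ∃ x ∈ A.L0, x ∉ A.lcs0 1 ∧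
      (∃ z ∈ A.L1, ((A.R x) ^ (m - 1)) z ≠ 0) ∧ (∀ z ∈ A.L1, ((A.R x) ^ m) z = 0)) :
    ∃ x₁ ∈ A.L0, ∃ y : Fin m → V,
      (∀ i, y i ∈ A.L1) ∧ LinearIndependent ℂ y ∧
      Submodule.span ℂ (Set.range y) = A.L1 ∧
      A.Generates {x₁, y ⟨0, by omega⟩} ∧
      (∀ i : ℕ, ∀ h : i + 1 < m, A.br (y ⟨i, by omega⟩) x₁ = y ⟨i + 1, h⟩) ∧
      A.br (y ⟨m - 1, by omega⟩) x₁ = 0 := by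
  classical
  obtain ⟨x, hxL0, _hx2, ⟨z, hzL1, hz⟩, _hjm⟩ := hjordan
  set K := A.lcs 1 with hKdef
  set π := K.mkQ with hπdef
  have hπzero : ∀ w : V, π w = 0 ↔ w ∈ K := by
    intro w
    rw [hπdef, Submodule.mkQ_apply, Submodule.Quotient.mk_eq_zero]
  -- the odd part is not inside L²
  have hL1notK : ¬ A.L1 ≤ K := by
    intro hle
    have hbot := A.L1_le_bot_of_le_lcs_one hnil hle
    rw [hbot] at hm
    rw [finrank_bot] at hm
    omega
  -- two-generatedness modulo L²
  obtain ⟨a, b, _hab, hgen⟩ := h2gen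
  have hWab : Submodule.span ℂ {a, b} ⊔ K = ⊤ := by
    apply hgen
    · intro w hw
      exact Submodule.mem_sup_left (Submodule.subset_span hw)
    · intro u _ v _
      exact Submodule.mem_sup_right (A.br_mem_lcs_one u v)
  have hmapK : Submodule.map π K = ⊥ := by
    rw [eq_bot_iff]
    rintro q ⟨w, hw, rfl⟩
    rw [Submodule.mem_bot, hπzero]
    exact hw
  have hQtop : (⊤ : Submodule ℂ (V ⧸ K)) = Submodule.span ℂ {π a, π b} := by
    have h1 := congrArg (Submodule.map π) hWab
    rw [Submodule.map_sup, hmapK, sup_bot_eq, Submodule.map_span, Set.image_insert_eq,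
      Set.image_singleton, Submodule.map_top, hπdef, Submodule.range_mkQ] at h1
    exact h1.symm
  have hfr2 : Module.finrank ℂ (V ⧸ K) ≤ 2 := by
    rw [← finrank_top ℂ (V ⧸ K), hQtop]
    have hcard : ({π a, π b} : Set (V ⧸ K)).toFinset.card ≤ 2 := by
      rw [Set.toFinset_insert, Set.toFinset_singleton]
      exact le_trans (Finset.card_insert_le _ _) (by simp)
    exact le_trans (finrank_span_le_card _) hcard
  set M0 := Submodule.map π A.L0 with hM0def
  set M1 := Submodule.map π A.L1 with hM1def
  have hsupM : M0 ⊔ M1 = ⊤ := by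
    rw [hM0def, hM1def, ← Submodule.map_sup, A.compl.codisjoint.eq_top, Submodule.map_top,
      hπdef, Submodule.range_mkQ]
  have hinfM : M0 ⊓ M1 = ⊥ := by
    rw [eq_bot_iff]
    rintro q ⟨hq0, hq1⟩
    obtain ⟨v0, hv0, rfl⟩ := hq0
    obtain ⟨v1, hv1, hq⟩ := hq1
    have hsub : v1 - v0 ∈ K := by
      rw [hπdef, Submodule.mkQ_apply, Submodule.mkQ_apply, Submodule.Quotient.eq] at hq
      exact hq
    obtain ⟨e, he, o, ho, heo⟩ := Submodule.mem_sup.mp (A.lcs_graded 1 hsub)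
    have h9 : v0 + e ∈ A.L0 ⊓ A.L1 := by
      refine Submodule.mem_inf.mpr ⟨A.L0.add_mem hv0 (Submodule.mem_inf.mp he).2, ?_⟩
      have h10 : v0 + e = v1 - o := by
        calc v0 + e = v0 + (e + o) - o := by abel
          _ = v0 + (v1 - v0) - o := by rw [heo]
          _ = v1 - o := by abel
      rw [h10]
      exact A.L1.sub_mem hv1 (Submodule.mem_inf.mp ho).2
    rw [A.L0_inf_L1, Submodule.mem_bot] at h9
    rw [Submodule.mem_bot, hπzero]
    have h11 : v0 = -e := eq_neg_of_add_eq_zero_left h9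
    rw [h11]
    exact K.neg_mem (Submodule.mem_inf.mp he).1
  have hM1ne : M1 ≠ ⊥ := by
    obtain ⟨w, hwL1, hwK⟩ := SetLike.not_le_iff_exists.mp hL1notK
    intro hbot
    have hmem : π w ∈ M1 := ⟨w, hwL1, rfl⟩
    rw [hbot, Submodule.mem_bot, hπzero] at hmem
    exact hwK hmem
  have hL0notK : ¬ A.L0 ≤ K := by
    intro hL0K
    apply hnot1gen z
    intro Wg hzW hWg
    apply A.subalg_top hnil Wg hWg
    rw [eq_top_iff, ← A.compl.codisjoint.eq_top]
    obtain ⟨y, hyL1, hyLI, hyspan, hy0, hyrel, _⟩ :=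
      A.chain_package hm hm1 hnil hxL0 hzL1 hz
    refine sup_le (le_trans hL0K le_sup_right) ?_
    rw [← hyspan, Submodule.span_le]
    rintro w ⟨i, rfl⟩
    rcases i with ⟨iv, hiv⟩
    rw [SetLike.mem_coe]
    cases iv with
    | zero =>
      refine Submodule.mem_sup_left ?_
      have h12 : y ⟨0, hiv⟩ = z := hy0
      rw [h12]
      exact hzW rfl
    | succ n =>
      refine Submodule.mem_sup_right ?_
      rw [← hyrel n hiv]
      exact A.br_mem_lcs_one _ _
  obtain ⟨u, huL0, huK⟩ := SetLike.not_le_iff_exists.mp hL0notK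
  have hBfin : ({t : ℂ | x + t • u ∈ K}).Finite := by
    apply Set.Subsingleton.finite
    intro t1 h1 t2 h2
    by_contra hne
    have hdm : (t1 - t2) • u ∈ K := by
      have h3 := K.sub_mem h1 h2
      have h4 : x + t1 • u - (x + t2 • u) = (t1 - t2) • u := by
        rw [sub_smul]; abel
      rwa [h4] at h3
    have h5 := K.smul_mem (t1 - t2)⁻¹ hdm
    rw [smul_smul, inv_mul_cancel₀ (sub_ne_zero.mpr hne), one_smul] at h5
    exact huK h5
  obtain ⟨t, htB, ht⟩ := exists_good_t (A.R x) (A.R u) z hm1 hz _ hBfin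
  set x₁ := x + t • u with hx₁def
  have hx1L0 : x₁ ∈ A.L0 := A.L0.add_mem hxL0 (A.L0.smul_mem t huL0)
  have hx1K : x₁ ∉ K := htB
  have hchain1 : ((A.R x₁) ^ (m - 1)) z ≠ 0 := by
    have hR : A.R x₁ = A.R x + t • A.R u := by
      rw [hx₁def]
      show A.br.flip (x + t • u) = _
      rw [map_add, map_smul]
      rfl
    rw [hR]
    exact ht
  obtain ⟨y, hyL1, hyLI, hyspan, hy0, hyrel, hylast⟩ :=
    A.chain_package hm hm1 hnil hx1L0 hzL1 hchain1
  refine ⟨x₁, hx1L0, y, hyL1, hyLI, hyspan, ?_, hyrel, hylast⟩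
  intro Wg hsub hWg
  apply A.subalg_top hnil Wg hWg
  have hyW : ∀ iv : ℕ, ∀ hiv : iv < m, y ⟨iv, hiv⟩ ∈ Wg := by
    intro iv
    induction iv with
    | zero => intro hiv; exact hsub (Set.mem_insert_of_mem _ rfl)
    | succ n ih =>
      intro hiv
      rw [← hyrel n hiv]
      exact hWg _ (ih (by omega)) _ (hsub (Set.mem_insert _ _))
  have hL1W : A.L1 ≤ Wg := by
    rw [← hyspan, Submodule.span_le]
    rintro w ⟨i, rfl⟩
    exact hyW i.1 i.2
  have hfrM1 : Module.finrank ℂ M1 ≠ 0 := fun h0 => hM1ne (Submodule.finrank_eq_zero.mp h0)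
  have hsum : Module.finrank ℂ M0 + Module.finrank ℂ M1 = Module.finrank ℂ (V ⧸ K) := by
    have h13 := Submodule.finrank_sup_add_finrank_inf_eq M0 M1
    rw [hsupM, hinfM, finrank_top, finrank_bot, add_zero] at h13
    exact h13.symm
  have hπx1 : π x₁ ≠ 0 := fun h => hx1K ((hπzero x₁).mp h)
  have hfrM0le : Module.finrank ℂ M0 ≤ 1 := by omega
  have hx1M0 : π x₁ ∈ M0 := ⟨x₁, hx1L0, rfl⟩
  have hM0eq : Submodule.span ℂ {π x₁} = M0 := by
    apply Submodule.eq_of_le_of_finrank_le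
    · rw [Submodule.span_le, Set.singleton_subset_iff]
      exact hx1M0
    · rw [finrank_span_singleton hπx1]
      exact hfrM0le
  have hL0le : A.L0 ≤ Submodule.span ℂ {x₁} ⊔ K := by
    intro w hw
    have h1 : π w ∈ M0 := ⟨w, hw, rfl⟩
    rw [← hM0eq, Submodule.mem_span_singleton] at h1
    obtain ⟨c, hc⟩ := h1
    have h2 : w - c • x₁ ∈ K := by
      rw [← hπzero, map_sub, map_smul, hc, sub_self]
    have h3 : w = c • x₁ + (w - c • x₁) := by abel
    rw [h3]
    exact Submodule.add_mem _
      (Submodule.mem_sup_left (Submodule.smul_mem _ _ (Submodule.subset_span rfl)))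
      (Submodule.mem_sup_right h2)
  rw [eq_top_iff, ← A.compl.codisjoint.eq_top]
  refine sup_le ?_ (le_trans hL1W le_sup_left)
  refine le_trans hL0le (sup_le ?_ le_sup_right)
  refine le_trans ?_ le_sup_left
  rw [Submodule.span_le, Set.singleton_subset_iff]
  exact hsub (Set.mem_insert _ _)
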